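/- Let T be a dyadic tree decomposition of [0,1]^n (children of Q are subsets of Q; cubes are disjoint or nested; μ(⋃ Child(Q)) < μ(Q)/4 for every Q) and suppose x ∈ [0,1]^n lies in an infinite descending path of cubes of T whose measures tend to 0. Then with f defined as 1 on Q ∖ ⋃Child(Q) for even-level Q and 0 for odd-level Q, the limit lim_{Q→x} (1/μ(Q)) ∫_Q f dμ over cubes containing x with diameter → 0 does not exist; in particular x is not a Lebesgue point of f. -/

import Mathlib

open MeasureTheory

/-- The half-open dyadic cube of precision `r` at `a`. -/
noncomputable def dCube (n r : ℕ) (a : Fin n → ℤ) : Set (Fin n → ℝ) :=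
  Set.univ.pi fun i => Set.Ico ((a i : ℝ) / 2 ^ r) (((a i : ℝ) + 1) / 2 ^ r)

/-- An open cube with corner `c` and side `s`. -/
def openCube (n : ℕ) (c : Fin n → ℝ) (s : ℝ) : Set (Fin n → ℝ) :=
  Set.univ.pi fun i => Set.Ioo (c i) (c i + s)

lemma dCube_measurableSet (n r : ℕ) (a : Fin n → ℤ) : MeasurableSet (dCube n r a) :=
  MeasurableSet.univ_pi fun _ => measurableSet_Ico

lemma openCube_measurableSet (n : ℕ) (c : Fin n → ℝ) (s : ℝ) :
    MeasurableSet (openCube n c s) :=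
  MeasurableSet.univ_pi fun _ => measurableSet_Ioo

lemma volume_dCube (n r : ℕ) (a : Fin n → ℤ) :
    volume (dCube n r a) = ENNReal.ofReal (((2 : ℝ) ^ r)⁻¹) ^ n := by
  rw [dCube, volume_pi_pi]
  have h : ∀ i : Fin n, volume (Set.Ico ((a i : ℝ) / 2 ^ r) (((a i : ℝ) + 1) / 2 ^ r))
      = ENNReal.ofReal (((2 : ℝ) ^ r)⁻¹) := by
    intro i
    rw [Real.volume_Ico]
    congr 1
    rw [div_sub_div_same]
    ring_nf
  simp [h, Finset.prod_const]

lemma volume_openCube (n : ℕ) (c : Fin n → ℝ) (s : ℝ) :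
    volume (openCube n c s) = ENNReal.ofReal s ^ n := by
  rw [openCube, volume_pi_pi]
  have h : ∀ i : Fin n, volume (Set.Ioo (c i) (c i + s)) = ENNReal.ofReal s := by
    intro i; rw [Real.volume_Ioo]; congr 1; ring
  simp [h, Finset.prod_const]

lemma one_add_pow_le {u : ℝ} (hu0 : 0 ≤ u) (hu1 : u ≤ 1) (n : ℕ) :
    (1 + u) ^ n ≤ 1 + ((2 : ℝ) ^ n - 1) * u := by
  induction n with
  | zero => simp
  | succ n ih =>
    have h2 : (1 : ℝ) ≤ 2 ^ n := one_le_pow₀ (by norm_num)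
    calc (1 + u) ^ (n + 1) = (1 + u) ^ n * (1 + u) := by ring
      _ ≤ (1 + ((2:ℝ) ^ n - 1) * u) * (1 + u) := by nlinarith
      _ ≤ 1 + ((2:ℝ) ^ (n + 1) - 1) * u := by
          rw [pow_succ]
          have huu : u * u ≤ u := by nlinarith
          nlinarith [mul_nonneg (sub_nonneg.mpr h2) (sub_nonneg.mpr huu)]

section Avg

variable {n : ℕ} {f : (Fin n → ℝ) → ℝ}

lemma avg_common (hfmeas : Measurable f) (hf01 : ∀ x, f x = 0 ∨ f x = 1)
    {S Q C : Set (Fin n → ℝ)} (hSm : MeasurableSet S)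
    (hCm : MeasurableSet C) (hQS : Q ⊆ S) (hCQ : C ⊆ Q)
    (hSfin : volume S ≠ ⊤)
    (hCsmall : volume C < volume Q / 4) :
    IntegrableOn f S volume ∧
      3 / 4 * (volume Q).toReal ≤ (volume (Q \ C)).toReal ∧
      (volume (Q \ C)).toReal ≤ (volume Q).toReal := by
  have hfb : ∀ y, 0 ≤ f y ∧ f y ≤ 1 := fun y => by rcases hf01 y with h | h <;> simp [h]
  have hQfin : volume Q ≠ ⊤ := fun h => hSfin (eq_top_iff.2 (h ▸ measure_mono hQS))
  have hCfin : volume C ≠ ⊤ :=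
    fun h => hQfin (eq_top_iff.2 (h ▸ measure_mono hCQ))
  have hint : IntegrableOn f S volume := by
    refine Measure.integrableOn_of_bounded (M := 1) hSfin hfmeas.aestronglyMeasurable ?_
    filter_upwards with y
    rcases hf01 y with h | h <;> simp [h]
  have hQC : volume (Q \ C) = volume Q - volume C :=
    measure_diff hCQ hCm.nullMeasurableSet hCfin
  have hCle : volume C ≤ volume Q := measure_mono hCQ
  have hsub : (volume (Q \ C)).toReal = (volume Q).toReal - (volume C).toReal := by
    rw [hQC, ENNReal.toReal_sub_of_le hCle hQfin]
  have hC4 : (volume C).toReal ≤ (volume Q).toReal / 4 := by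
    have h4 : (volume Q / 4).toReal = (volume Q).toReal / 4 := by
      rw [ENNReal.toReal_div]; norm_num
    calc (volume C).toReal ≤ (volume Q / 4).toReal :=
          ENNReal.toReal_mono (by simp [ENNReal.div_eq_top, hQfin]) hCsmall.le
      _ = (volume Q).toReal / 4 := h4
  refine ⟨hint, ?_, ?_⟩
  · rw [hsub]; linarith
  · exact ENNReal.toReal_mono hQfin (measure_mono Set.diff_subset)

lemma avg_lower (hfmeas : Measurable f) (hf01 : ∀ x, f x = 0 ∨ f x = 1)
    {S Q C : Set (Fin n → ℝ)} (hSm : MeasurableSet S) (hQm : MeasurableSet Q)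
    (hCm : MeasurableSet C) (hQS : Q ⊆ S) (hCQ : C ⊆ Q)
    (hSfin : volume S ≠ ⊤)
    (hCsmall : volume C < volume Q / 4)
    (hSle : (volume S).toReal ≤ 17 / 16 * (volume Q).toReal)
    (hQpos : 0 < (volume Q).toReal)
    (hone : ∀ y ∈ Q \ C, f y = 1) :
    11 / 16 ≤ (∫ y in S, f y) / (volume S).toReal := by
  obtain ⟨hint, h34, -⟩ := avg_common hfmeas hf01 hSm hCm hQS hCQ hSfin hCsmall
  have hfb : ∀ y, 0 ≤ f y := fun y => by rcases hf01 y with h | h <;> simp [h]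
  have hSpos : 0 < (volume S).toReal := by
    have : volume Q ≤ volume S := measure_mono hQS
    have := ENNReal.toReal_mono hSfin this
    linarith
  have hQCm : MeasurableSet (Q \ C) := hQm.diff hCm
  have h1 : (volume (Q \ C)).toReal ≤ ∫ y in S, f y := by
    have e1 : ∫ y in Q \ C, f y = (volume (Q \ C)).toReal := by
      rw [setIntegral_congr_fun hQCm hone]
      simp
      rfl
    calc (volume (Q \ C)).toReal = ∫ y in Q \ C, f y := e1.symm
      _ ≤ ∫ y in S, f y :=
        setIntegral_mono_set hint (Filter.Eventually.of_forall hfb)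
          (Filter.Eventually.of_forall (fun y hy => hQS hy.1))
  rw [le_div_iff₀ hSpos]
  nlinarith

lemma avg_upper (hfmeas : Measurable f) (hf01 : ∀ x, f x = 0 ∨ f x = 1)
    {S Q C : Set (Fin n → ℝ)} (hSm : MeasurableSet S) (hQm : MeasurableSet Q)
    (hCm : MeasurableSet C) (hQS : Q ⊆ S) (hCQ : C ⊆ Q)
    (hSfin : volume S ≠ ⊤)
    (hCsmall : volume C < volume Q / 4)
    (hSle : (volume S).toReal ≤ 17 / 16 * (volume Q).toReal)
    (hQpos : 0 < (volume Q).toReal)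
    (hzero : ∀ y ∈ Q \ C, f y = 0) :
    (∫ y in S, f y) / (volume S).toReal ≤ 5 / 16 := by
  obtain ⟨hint, h34, hle⟩ := avg_common hfmeas hf01 hSm hCm hQS hCQ hSfin hCsmall
  have hQCm : MeasurableSet (Q \ C) := hQm.diff hCm
  have hQCS : Q \ C ⊆ S := fun y hy => hQS hy.1
  have hSpos : 0 < (volume S).toReal := by
    have := ENNReal.toReal_mono hSfin (measure_mono hQS)
    linarith
  have e0 : ∫ y in Q \ C, f y = 0 := by
    rw [setIntegral_congr_fun hQCm hzero]; simp
  have ediff : ∫ y in S \ (Q \ C), f y = ∫ y in S, f y := by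
    rw [integral_diff hQCm hint hQCS, e0, sub_zero]
  have hup : ∫ y in S \ (Q \ C), f y ≤ (volume (S \ (Q \ C))).toReal := by
    have hb : ∀ y ∈ S \ (Q \ C), f y ≤ 1 := fun y _ => by
      rcases hf01 y with h | h <;> simp [h]
    have hconst : IntegrableOn (fun _ => (1:ℝ)) (S \ (Q \ C)) volume := by
      refine (integrableOn_const_iff (C := (1:ℝ))).mpr (Or.inr ?_)
      exact lt_of_le_of_lt (measure_mono Set.diff_subset) hSfin.lt_top
    calc ∫ y in S \ (Q \ C), f y ≤ ∫ _ in S \ (Q \ C), (1:ℝ) :=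
          setIntegral_mono_on (hint.mono_set Set.diff_subset) hconst
            (hSm.diff hQCm) hb
      _ = (volume (S \ (Q \ C))).toReal := by simp; rfl
  have hvol : (volume (S \ (Q \ C))).toReal
      = (volume S).toReal - (volume (Q \ C)).toReal := by
    rw [measure_diff hQCS hQCm.nullMeasurableSet
        (lt_of_le_of_lt (measure_mono hQCS) hSfin.lt_top).ne,
      ENNReal.toReal_sub_of_le (measure_mono hQCS) hSfin]
  rw [div_le_iff₀ hSpos, ← ediff]
  have : (volume (S \ (Q \ C))).toReal ≤ 5 / 16 * (volume S).toReal := by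
    rw [hvol]
    nlinarith
  linarith

end Avg

lemma key_avg {n : ℕ} (hn : 0 < n) {f : (Fin n → ℝ) → ℝ}
    (hfmeas : Measurable f) (hf01 : ∀ x, f x = 0 ∨ f x = 1)
    (r : ℕ) (a : Fin n → ℤ) (C : Set (Fin n → ℝ)) (hCm : MeasurableSet C)
    (hCQ : C ⊆ dCube n r a) (hCsmall : volume C < volume (dCube n r a) / 4)
    (x : Fin n → ℝ) (hx : x ∈ dCube n r a) :
    ∃ c : Fin n → ℝ,
      x ∈ openCube n c ((1 + ((16 : ℝ) * 2 ^ n)⁻¹) *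
          ((volume (dCube n r a)).toReal) ^ ((n : ℝ)⁻¹)) ∧
      ((∀ y ∈ dCube n r a \ C, f y = 1) →
        11 / 16 ≤ (∫ y in openCube n c ((1 + ((16 : ℝ) * 2 ^ n)⁻¹) *
            ((volume (dCube n r a)).toReal) ^ ((n : ℝ)⁻¹)), f y) /
          (volume (openCube n c ((1 + ((16 : ℝ) * 2 ^ n)⁻¹) *
            ((volume (dCube n r a)).toReal) ^ ((n : ℝ)⁻¹)))).toReal) ∧
      ((∀ y ∈ dCube n r a \ C, f y = 0) →
        (∫ y in openCube n c ((1 + ((16 : ℝ) * 2 ^ n)⁻¹) *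
            ((volume (dCube n r a)).toReal) ^ ((n : ℝ)⁻¹)), f y) /
          (volume (openCube n c ((1 + ((16 : ℝ) * 2 ^ n)⁻¹) *
            ((volume (dCube n r a)).toReal) ^ ((n : ℝ)⁻¹)))).toReal ≤ 5 / 16) := by
  set u : ℝ := ((16 : ℝ) * 2 ^ n)⁻¹ with hu
  have hu0 : 0 < u := by positivity
  have hu1 : u ≤ 1 := by
    rw [hu]
    rw [inv_le_one_iff₀]
    right
    nlinarith [one_le_pow₀ (show (1:ℝ) ≤ 2 by norm_num) (n := n)]
  have hun : ((2 : ℝ) ^ n - 1) * u ≤ 1 / 16 := by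
    rw [hu]
    rw [mul_inv_le_iff₀ (by positivity)]
    nlinarith [pow_pos (show (0:ℝ) < 2 by norm_num) n]
  set t : ℝ := ((2 : ℝ) ^ r)⁻¹ with ht
  have ht0 : 0 < t := by positivity
  have hvQ : (volume (dCube n r a)).toReal = t ^ n := by
    rw [volume_dCube, ENNReal.toReal_pow, ENNReal.toReal_ofReal ht0.le]
  have hs : (volume (dCube n r a)).toReal ^ ((n : ℝ)⁻¹) = t := by
    rw [hvQ, Real.pow_rpow_inv_natCast ht0.le hn.ne']
  set s : ℝ := (1 + u) * ((volume (dCube n r a)).toReal) ^ ((n : ℝ)⁻¹) with hsdef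
  have hst : s = (1 + u) * t := by rw [hsdef, hs]
  have hs0 : 0 < s := by rw [hst]; positivity
  set c : Fin n → ℝ := fun i => (a i : ℝ) * t - u * t / 2 with hc
  have hQsub : dCube n r a ⊆ openCube n c s := by
    intro y hy
    intro i _
    have hyi := hy i (Set.mem_univ i)
    simp only [Set.mem_Ico] at hyi
    have hdiv : ((a i : ℝ)) / 2 ^ r = (a i : ℝ) * t := by rw [ht, div_eq_mul_inv]
    have hdiv2 : ((a i : ℝ) + 1) / 2 ^ r = ((a i : ℝ) + 1) * t := by
      rw [ht, div_eq_mul_inv]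
    rw [hdiv] at hyi
    rw [hdiv2] at hyi
    constructor
    · rw [hc]; simp only
      nlinarith [hyi.1]
    · rw [hc]; simp only
      rw [hst]
      nlinarith [hyi.2]
  have hSm : MeasurableSet (openCube n c s) := openCube_measurableSet n c s
  have hQm : MeasurableSet (dCube n r a) := dCube_measurableSet n r a
  have hvS : (volume (openCube n c s)).toReal = s ^ n := by
    rw [volume_openCube, ENNReal.toReal_pow, ENNReal.toReal_ofReal hs0.le]
  have hSfin : volume (openCube n c s) ≠ ⊤ := by
    rw [volume_openCube]
    exact (ENNReal.pow_ne_top ENNReal.ofReal_ne_top)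
  have hSle : (volume (openCube n c s)).toReal ≤ 17 / 16 * (volume (dCube n r a)).toReal := by
    rw [hvS, hvQ, hst, mul_pow]
    have h1 : (1 + u) ^ n ≤ 1 + ((2 : ℝ) ^ n - 1) * u := one_add_pow_le hu0.le hu1 n
    have h2 : (1 + u) ^ n ≤ 17 / 16 := by linarith
    have ht0n : (0:ℝ) < t ^ n := by positivity
    nlinarith
  have hQpos : 0 < (volume (dCube n r a)).toReal := by rw [hvQ]; positivity
  exact ⟨c, hQsub hx,
    fun hone => avg_lower hfmeas hf01 hSm hQm hCm hQsub hCQ hSfin hCsmall hSle hQpos hone,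
    fun hzero => avg_upper hfmeas hf01 hSm hQm hCm hQsub hCQ hSfin hCsmall hSle hQpos hzero⟩

/-- with `T` a dyadic tree decomposition and `f` the alternating
indicator function of STATEMENT 12, if `x` lies in an infinite descending path of
cubes of `T` whose measures tend to `0`, then the limit of the averages of `f` over
open cubes containing `x` with diameter tending to `0` does not exist; in particular
`x` is not a Lebesgue point of `f`. -/
theorem stmt13 (n : ℕ) (ι : Type) [Countable ι]
    (cube : ι → Set (Fin n → ℝ)) (level : ι → ℕ) (children : ι → Set ι)
    (hdyadic : ∀ i, ∃ (r : ℕ) (a : Fin n → ℤ), cube i = dCube n r a)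
    (hroot : ∃ i0, cube i0 = dCube n 0 0 ∧ level i0 = 0)
    (hchild_sub : ∀ i, ∀ j ∈ children i, cube j ⊆ cube i)
    (hchild_level : ∀ i, ∀ j ∈ children i, level j = level i + 1)
    (hnest : ∀ i j, cube i ∩ cube j = ∅ ∨ cube i ⊆ cube j ∨ cube j ⊆ cube i)
    (hmeas : ∀ i, volume (⋃ j ∈ children i, cube j) < volume (cube i) / 4)
    (f : (Fin n → ℝ) → ℝ) (hfmeas : Measurable f)
    (hf01 : ∀ x, f x = 0 ∨ f x = 1)
    (hfdef : ∀ i, ∀ x ∈ cube i \ ⋃ j ∈ children i, cube j,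
      f x = if Even (level i) then 1 else 0)
    (x : Fin n → ℝ)
    (hpath : ∃ p : ℕ → ι, (∀ k, p (k + 1) ∈ children (p k)) ∧ (∀ k, x ∈ cube (p k)) ∧
      Filter.Tendsto (fun k => volume (cube (p k))) Filter.atTop (nhds 0)) :
    ¬ ∃ L : ℝ, ∀ (c : ℕ → Fin n → ℝ) (s : ℕ → ℝ),
        (∀ k, 0 < s k) →
        (∀ k, x ∈ openCube n (c k) (s k)) →
        Filter.Tendsto s Filter.atTop (nhds 0) →
        Filter.Tendsto
          (fun k => (∫ y in openCube n (c k) (s k), f y) /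
            (volume (openCube n (c k) (s k))).toReal)
          Filter.atTop (nhds L) := by
  rintro ⟨L, hL⟩
  obtain ⟨p, hpc, hpx, hpvol⟩ := hpath
  -- degenerate case n = 0
  rcases Nat.eq_zero_or_pos n with hn0 | hn
  · have h1 : ∀ k : ℕ, volume (cube (p k)) = 1 := by
      intro k
      obtain ⟨r, a, hQ⟩ := hdyadic (p k)
      rw [hQ, volume_dCube, hn0]
      simp
    have h0 : Filter.Tendsto (fun _ : ℕ => (1 : ENNReal)) Filter.atTop (nhds 0) := by
      simpa [h1] using hpvol
    exact zero_ne_one (tendsto_nhds_unique h0 tendsto_const_nhds)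
  -- general setup
  have hlevel : ∀ k, level (p k) = level (p 0) + k := by
    intro k
    induction k with
    | zero => rfl
    | succ k ih => rw [hchild_level _ _ (hpc k), ih]; omega
  have hcube_meas : ∀ i, MeasurableSet (cube i) := by
    intro i; obtain ⟨r, a, hQ⟩ := hdyadic i; rw [hQ]; exact dCube_measurableSet n r a
  have hCm : ∀ i, MeasurableSet (⋃ j ∈ children i, cube j) := fun i =>
    MeasurableSet.biUnion (Set.to_countable _) fun j _ => hcube_meas j
  have hCQ : ∀ i, (⋃ j ∈ children i, cube j) ⊆ cube i := fun i =>
    Set.iUnion₂_subset (hchild_sub i)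
  have hvolpos : ∀ i, 0 < (volume (cube i)).toReal := by
    intro i
    obtain ⟨r, a, hQ⟩ := hdyadic i
    rw [hQ, volume_dCube, ENNReal.toReal_pow, ENNReal.toReal_ofReal (by positivity)]
    positivity
  -- the key per-index statement
  have hkey : ∀ i, x ∈ cube i → ∃ c : Fin n → ℝ,
      x ∈ openCube n c ((1 + ((16 : ℝ) * 2 ^ n)⁻¹) *
          ((volume (cube i)).toReal) ^ ((n : ℝ)⁻¹)) ∧
      (Even (level i) →
        11 / 16 ≤ (∫ y in openCube n c ((1 + ((16 : ℝ) * 2 ^ n)⁻¹) *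
            ((volume (cube i)).toReal) ^ ((n : ℝ)⁻¹)), f y) /
          (volume (openCube n c ((1 + ((16 : ℝ) * 2 ^ n)⁻¹) *
            ((volume (cube i)).toReal) ^ ((n : ℝ)⁻¹)))).toReal) ∧
      (¬ Even (level i) →
        (∫ y in openCube n c ((1 + ((16 : ℝ) * 2 ^ n)⁻¹) *
            ((volume (cube i)).toReal) ^ ((n : ℝ)⁻¹)), f y) /
          (volume (openCube n c ((1 + ((16 : ℝ) * 2 ^ n)⁻¹) *
            ((volume (cube i)).toReal) ^ ((n : ℝ)⁻¹)))).toReal ≤ 5 / 16) := by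
    intro i hxi
    obtain ⟨r, a, hQ⟩ := hdyadic i
    rw [hQ]
    obtain ⟨c, hmem, hlow, hupp⟩ := key_avg hn hfmeas hf01 r a
      (⋃ j ∈ children i, cube j) (hCm i) (hQ ▸ hCQ i) (hQ ▸ hmeas i) x (hQ ▸ hxi)
    refine ⟨c, hmem, fun he => hlow ?_, fun ho => hupp ?_⟩
    · intro y hy
      have := hfdef i y (by rw [hQ]; exact hy)
      simpa [he] using this
    · intro y hy
      have := hfdef i y (by rw [hQ]; exact hy)
      simpa [ho] using this
  -- tendsto machinery for a subsequence p (2k + o)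
  have hmain : ∀ o : ℕ,
      Filter.Tendsto (fun k => (1 + ((16 : ℝ) * 2 ^ n)⁻¹) *
        ((volume (cube (p (2 * k + o)))).toReal) ^ ((n : ℝ)⁻¹))
        Filter.atTop (nhds 0) := by
    intro o
    have hsub : Filter.Tendsto (fun k => volume (cube (p (2 * k + o))))
        Filter.atTop (nhds 0) :=
      hpvol.comp (Filter.tendsto_atTop_mono (fun k => by simp only [id_eq]; omega) Filter.tendsto_id)
    have h1 : Filter.Tendsto (fun k => (volume (cube (p (2 * k + o)))).toReal)
        Filter.atTop (nhds 0) := by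
      have := (ENNReal.tendsto_toReal (a := 0) (by simp)).comp hsub
      simpa [Function.comp_def] using this
    have h2 : Filter.Tendsto
        (fun k => ((volume (cube (p (2 * k + o)))).toReal) ^ ((n : ℝ)⁻¹))
        Filter.atTop (nhds 0) := by
      have hc : ContinuousAt (fun y : ℝ => y ^ ((n : ℝ)⁻¹)) 0 :=
        Real.continuousAt_rpow_const 0 _ (Or.inr (by positivity))
      have := hc.tendsto.comp h1
      simpa [Function.comp_def, Real.zero_rpow (show ((n : ℝ)⁻¹) ≠ 0 by positivity)] using this
    simpa using h2.const_mul (1 + ((16 : ℝ) * 2 ^ n)⁻¹)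
  have hspos : ∀ i, 0 < (1 + ((16 : ℝ) * 2 ^ n)⁻¹) *
      ((volume (cube i)).toReal) ^ ((n : ℝ)⁻¹) := by
    intro i
    have := hvolpos i
    positivity
  by_cases hL12 : L ≤ 1 / 2
  · -- use even-level cubes: averages ≥ 11/16
    set o : ℕ := level (p 0) % 2 with ho
    have hpar : ∀ k, Even (level (p (2 * k + o))) := by
      intro k
      rw [hlevel, Nat.even_iff]
      omega
    choose c hc1 hc2 hc3 using fun k => hkey (p (2 * k + o)) (hpx (2 * k + o))
    have htend := hL c _ (fun k => hspos _) hc1 (hmain o)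
    have : 11 / 16 ≤ L :=
      ge_of_tendsto htend (Filter.Eventually.of_forall fun k => hc2 k (hpar k))
    linarith
  · -- use odd-level cubes: averages ≤ 5/16
    set o : ℕ := (level (p 0) + 1) % 2 with ho
    have hpar : ∀ k, ¬ Even (level (p (2 * k + o))) := by
      intro k h
      rw [hlevel, Nat.even_iff] at h
      omega
    choose c hc1 hc2 hc3 using fun k => hkey (p (2 * k + o)) (hpx (2 * k + o))
    have htend := hL c _ (fun k => hspos _) hc1 (hmain o)
    have : L ≤ 5 / 16 :=
      le_of_tendsto htend (Filter.Eventually.of_forall fun k => hc3 k (hpar k))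
    linarith
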